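/- Let 𝓥 be a variety, let T be a numerical semigroup, let 𝓥_T = {S ∩ T | S ∈ 𝓥}, and let A ⊆ T. Then A is the minimal 𝓥_T-system of generators of 𝓥_T(A) if and only if A is the minimal 𝓥-system of generators of 𝓥(A). -/

import Mathlib

/-- A numerical semigroup: a subset of ℕ containing 0, closed under addition,
with finite complement. -/
def IsNumericalSemigroup (S : Set ℕ) : Prop :=
  0 ∈ S ∧ (∀ a ∈ S, ∀ b ∈ S, a + b ∈ S) ∧ Sᶜ.Finite

/-- The Frobenius number of `S` restricted to `T`: `max (T \ S)`. -/
noncomputable def FrobR (T S : Set ℕ) : ℕ := sSup (T \ S)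

/-- The Frobenius number of `S`: `max (ℕ \ S)`. -/
noncomputable def Frob (S : Set ℕ) : ℕ := sSup Sᶜ

/-- `R` is an R-variety with maximum element `Δ`. -/
structure IsRVariety (R : Set (Set ℕ)) (Δ : Set ℕ) : Prop where
  sgrp : ∀ S ∈ R, IsNumericalSemigroup S
  max_mem : Δ ∈ R
  subset_max : ∀ S ∈ R, S ⊆ Δ
  inter_mem : ∀ S ∈ R, ∀ T ∈ R, S ∩ T ∈ R
  step : ∀ S ∈ R, S ≠ Δ → S ∪ {FrobR Δ S} ∈ R

/-- `P` is a (Frobenius) pseudo-variety with maximum element `Δ`. -/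
structure IsPseudoVariety (P : Set (Set ℕ)) (Δ : Set ℕ) : Prop where
  sgrp : ∀ S ∈ P, IsNumericalSemigroup S
  max_mem : Δ ∈ P
  subset_max : ∀ S ∈ P, S ⊆ Δ
  inter_mem : ∀ S ∈ P, ∀ T ∈ P, S ∩ T ∈ P
  step : ∀ S ∈ P, S ≠ Δ → S ∪ {Frob S} ∈ P

/-- `V` is a (Frobenius) variety. -/
structure IsVariety (V : Set (Set ℕ)) : Prop where
  nonempty : V.Nonempty
  sgrp : ∀ S ∈ V, IsNumericalSemigroup S
  inter_mem : ∀ S ∈ V, ∀ T ∈ V, S ∩ T ∈ V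
  step : ∀ S ∈ V, S ≠ Set.univ → S ∪ {Frob S} ∈ V

/-- `M` is an `F`-monoid: an intersection of a nonempty subfamily of `F`. -/
def IsFMonoid (F : Set (Set ℕ)) (M : Set ℕ) : Prop :=
  ∃ G : Set (Set ℕ), G ⊆ F ∧ G.Nonempty ∧ M = ⋂₀ G

/-- The `F`-monoid generated by `A`: the intersection of all `F`-monoids containing `A`. -/
def FGen (F : Set (Set ℕ)) (A : Set ℕ) : Set ℕ :=
  ⋂₀ {M | IsFMonoid F M ∧ A ⊆ M}

/-- `A` is a minimal `F`-system of generators of `M`. -/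
def IsMinGenSystem (F : Set (Set ℕ)) (A M : Set ℕ) : Prop :=
  FGen F A = M ∧ ∀ B ⊂ A, FGen F B ≠ M

/-- A submonoid of `(ℕ, +)`. -/
def IsNatSubmonoid (M : Set ℕ) : Prop :=
  0 ∈ M ∧ ∀ a ∈ M, ∀ b ∈ M, a + b ∈ M

/-- The chain of `S` restricted to `Δ`. -/
def RestrictedChain (S Δ : Set ℕ) : Set (Set ℕ) :=
  {X | ∃ n : ℕ, X = S ∪ {x ∈ Δ | n ≤ x}}


lemma univ_mem_of_variety (V : Set (Set ℕ)) (hV : IsVariety V) : Set.univ ∈ V := by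
  obtain ⟨S, hS⟩ := hV.nonempty
  have hfin : Sᶜ.Finite := (hV.sgrp S hS).2.2
  suffices h : ∀ n (S : Set ℕ), S ∈ V → ∀ hf : Sᶜ.Finite, hf.toFinset.card ≤ n →
      Set.univ ∈ V from h _ S hS hfin le_rfl
  intro n
  induction n with
  | zero =>
    intro S hS hf hcard
    have : Sᶜ = ∅ := by
      have := Finset.card_eq_zero.mp (Nat.le_zero.mp hcard)
      simpa [Set.Finite.toFinset_eq_empty] using this
    have : S = Set.univ := by rwa [← Set.compl_empty_iff]
    rwa [← this]
  | succ n ih =>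
    intro S hS hf hcard
    by_cases hSu : S = Set.univ
    · rwa [← hSu]
    · have hne : Sᶜ.Nonempty := by rwa [Set.nonempty_compl]
      have hfr : Frob S ∈ Sᶜ := hne.csSup_mem hf
      have hS' : S ∪ {Frob S} ∈ V := hV.step S hS hSu
      have hcomp : (S ∪ {Frob S})ᶜ = Sᶜ \ {Frob S} := by
        rw [Set.compl_union, Set.diff_eq]
      have hf' : (S ∪ {Frob S})ᶜ.Finite := by rw [hcomp]; exact hf.diff
      refine ih (S ∪ {Frob S}) hS' hf' ?_
      have hsub : hf'.toFinset ⊆ hf.toFinset.erase (Frob S) := by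
        intro x hx
        simp only [Set.Finite.mem_toFinset, hcomp, Set.mem_diff, Set.mem_singleton_iff] at hx
        simp [Finset.mem_erase, Set.Finite.mem_toFinset, hx.1, hx.2]
      have := Finset.card_le_card hsub
      have h2 := Finset.card_erase_of_mem (by simpa [Set.Finite.mem_toFinset] using hfr)
        (s := hf.toFinset)
      omega

lemma subset_FGen (F : Set (Set ℕ)) (A : Set ℕ) : A ⊆ FGen F A := by
  intro x hx M hM
  exact hM.2 hx

lemma FGen_eq (F : Set (Set ℕ)) (B : Set ℕ) (h : ∃ S ∈ F, B ⊆ S) :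
    FGen F B = ⋂₀ {S ∈ F | B ⊆ S} := by
  apply subset_antisymm
  · intro x hx
    apply hx
    refine ⟨⟨{S | S ∈ F ∧ B ⊆ S}, fun S hS => hS.1, ?_, rfl⟩, ?_⟩
    · obtain ⟨S, hSF, hBS⟩ := h; exact ⟨S, hSF, hBS⟩
    · intro b hb S hS; exact hS.2 hb
  · intro x hx M hM
    obtain ⟨⟨G, hGF, hGne, rfl⟩, hBM⟩ := hM
    intro S hS
    exact hx S ⟨hGF hS, fun b hb => hBM hb S hS⟩

lemma FGen_restrict (V : Set (Set ℕ)) (hV : IsVariety V) (T B : Set ℕ) (hB : B ⊆ T) :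
    FGen {X | ∃ S ∈ V, X = S ∩ T} B = FGen V B ∩ T := by
  have huniv : Set.univ ∈ V := univ_mem_of_variety V hV
  have hTmem : T ∈ {X | ∃ S ∈ V, X = S ∩ T} := ⟨Set.univ, huniv, (Set.univ_inter T).symm⟩
  rw [FGen_eq _ B ⟨T, hTmem, hB⟩, FGen_eq V B ⟨Set.univ, huniv, Set.subset_univ B⟩]
  apply subset_antisymm
  · intro x hx
    constructor
    · intro S hS
      exact (hx (S ∩ T) ⟨⟨S, hS.1, rfl⟩, Set.subset_inter hS.2 hB⟩).1
    · exact hx T ⟨hTmem, hB⟩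
  · rintro x ⟨hx1, hx2⟩ X hX
    obtain ⟨⟨S, hSV, rfl⟩, hBX⟩ := hX
    exact ⟨hx1 S ⟨hSV, fun b hb => (hBX hb).1⟩, hx2⟩

lemma FGen_mono (F : Set (Set ℕ)) {B A : Set ℕ} (h : B ⊆ A) : FGen F B ⊆ FGen F A := by
  intro x hx M hM
  exact hx M ⟨hM.1, h.trans hM.2⟩

/-- For `A ⊆ T`, `A` is the minimal `𝓥_T`-system of generators
of `𝓥_T(A)` iff `A` is the minimal `𝓥`-system of generators of `𝓥(A)`. -/
theorem isMinGenSystem_inter_iff (V : Set (Set ℕ)) (hV : IsVariety V)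
    (T : Set ℕ) (hT : IsNumericalSemigroup T) (A : Set ℕ) (hA : A ⊆ T) :
    IsMinGenSystem {X | ∃ S ∈ V, X = S ∩ T} A
        (FGen {X | ∃ S ∈ V, X = S ∩ T} A) ↔
      IsMinGenSystem V A (FGen V A) := by
  have huniv : Set.univ ∈ V := univ_mem_of_variety V hV
  have key : ∀ B ⊆ A, (FGen {X | ∃ S ∈ V, X = S ∩ T} B = FGen {X | ∃ S ∈ V, X = S ∩ T} A
      ↔ FGen V B = FGen V A) := by
    intro B hBA
    have hBT : B ⊆ T := hBA.trans hA
    rw [FGen_restrict V hV T B hBT, FGen_restrict V hV T A hA]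
    constructor
    · intro h
      apply subset_antisymm (FGen_mono V hBA)
      have hAB : A ⊆ FGen V B := by
        intro a ha
        have : a ∈ FGen V A ∩ T := ⟨subset_FGen V A ha, hA ha⟩
        exact (h ▸ this).1
      intro x hx
      rw [FGen_eq V B ⟨Set.univ, huniv, Set.subset_univ B⟩]
      intro S hS
      have hFS : FGen V B ⊆ S := by
        rw [FGen_eq V B ⟨Set.univ, huniv, Set.subset_univ B⟩]
        exact Set.sInter_subset_of_mem hS
      exact hx S ⟨⟨{S}, by simp [hS.1], Set.singleton_nonempty S, by simp⟩, hAB.trans hFS⟩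
    · intro h; rw [h]
  constructor
  · rintro ⟨-, h⟩
    exact ⟨rfl, fun B hB hc => h B hB ((key B hB.subset).mpr hc)⟩
  · rintro ⟨-, h⟩
    exact ⟨rfl, fun B hB hc => h B hB ((key B hB.subset).mp hc)⟩
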